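/- For every real number x > 5 and all positive integers a and b, the polynomials Pₙ satisfy P_a(x) · P_b(x) > P_{a+b}(x). -/

import Mathlib

/-- `σ₂(n) = ∑_{d ∣ n} d²`, the sum of the squares of the divisors of `n`. -/
def sigma2 (n : ℕ) : ℕ := ∑ d ∈ n.divisors, d ^ 2

/-- The polynomials `Pₙ`, defined by `P 0 = 1` and
`Pₙ(x) = (x/n) ∑_{k=1}^{n} σ₂(k) · P_{n−k}(x)` for `n ≥ 1`.
They satisfy `Pₙ(1) = pp(n)`, the number of plane partitions of `n`. -/
noncomputable def P : ℕ → Polynomial ℝ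
  | 0 => 1
  | n + 1 => Polynomial.C (((n : ℝ) + 1)⁻¹) * Polynomial.X *
      ∑ k ∈ Finset.range (n + 1), Polynomial.C ((sigma2 (k + 1) : ℝ)) * P (n - k)

open Polynomial Finset

lemma sigma2_one : sigma2 1 = 1 := by decide
lemma sigma2_two : sigma2 2 = 5 := by decide

lemma sq_le_sigma2 (n : ℕ) (hn : 0 < n) : n ^ 2 ≤ sigma2 n :=
  Finset.single_le_sum (f := fun d => d ^ 2) (fun i _ => Nat.zero_le _)
    (Nat.mem_divisors_self n hn.ne')

lemma sigma2_pos (n : ℕ) (hn : 0 < n) : 0 < sigma2 n :=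
  lt_of_lt_of_le (by positivity) (sq_le_sigma2 n hn)

lemma P_eval_succ (x : ℝ) (n : ℕ) :
    (P (n + 1)).eval x = ((n : ℝ) + 1)⁻¹ * x *
      ∑ k ∈ Finset.range (n + 1), (sigma2 (k + 1) : ℝ) * (P (n - k)).eval x := by
  rw [P]
  simp [Polynomial.eval_finset_sum]

lemma P_eval_succ' (x : ℝ) (n : ℕ) :
    ((n : ℝ) + 1) * (P (n + 1)).eval x =
      x * ∑ k ∈ Finset.range (n + 1), (sigma2 (k + 1) : ℝ) * (P (n - k)).eval x := by
  rw [P_eval_succ]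
  have h : ((n : ℝ) + 1) ≠ 0 := by positivity
  field_simp

lemma P_pos (x : ℝ) (hx : 0 < x) : ∀ n, 0 < (P n).eval x := by
  intro n
  induction n using Nat.strong_induction_on with
  | _ n ih =>
    match n with
    | 0 => simp [P]
    | n + 1 =>
      rw [P_eval_succ]
      refine mul_pos (mul_pos (by positivity) hx) (Finset.sum_pos ?_ ⟨0, Finset.mem_range.mpr (Nat.succ_pos n)⟩)
      intro k hk
      refine mul_pos ?_ (ih (n - k) (by omega))
      exact_mod_cast sigma2_pos (k + 1) (Nat.succ_pos k)

lemma sum_inv_sq_le : ∀ n : ℕ, 1 ≤ n →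
    ∑ d ∈ Finset.Icc 1 n, ((d : ℝ)⁻¹) ^ 2 ≤ 2 - (n : ℝ)⁻¹ := by
  intro n hn
  induction n with
  | zero => omega
  | succ m ihm =>
    rcases Nat.lt_or_ge m 1 with hm | hm
    · interval_cases m
      norm_num
    · have h0 : (0 : ℝ) < m := by exact_mod_cast hm
      rw [Finset.sum_Icc_succ_top (by omega)]
      have key : ((m : ℝ) + 1)⁻¹ ^ 2 ≤ (m : ℝ)⁻¹ - ((m : ℝ) + 1)⁻¹ := by
        have h1 : (m : ℝ)⁻¹ - ((m : ℝ) + 1)⁻¹ = ((m : ℝ) * ((m : ℝ) + 1))⁻¹ := by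
          field_simp
          ring
        rw [h1, show (((m : ℝ) + 1)⁻¹) ^ 2 = (((m : ℝ) + 1) * ((m : ℝ) + 1))⁻¹ by
          rw [sq, mul_inv]]
        apply inv_anti₀ (by positivity)
        nlinarith
      have := ihm hm
      push_cast
      push_cast at this
      linarith

lemma sigma2_le_real (n : ℕ) : (sigma2 n : ℝ) ≤ 2 * (n : ℝ) ^ 2 := by
  rcases Nat.eq_zero_or_pos n with rfl | hn
  · simp [sigma2]
  have h1 : sigma2 n = ∑ d ∈ n.divisors, (n / d) ^ 2 :=
    (Nat.sum_div_divisors n (fun d => d ^ 2)).symm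
  have h2 : (sigma2 n : ℝ) = ∑ d ∈ n.divisors, ((n / d : ℕ) : ℝ) ^ 2 := by
    rw [h1]; push_cast; ring
  rw [h2]
  have h3 : ∑ d ∈ n.divisors, ((n / d : ℕ) : ℝ) ^ 2 ≤
      ∑ d ∈ n.divisors, (n : ℝ) ^ 2 * ((d : ℝ)⁻¹) ^ 2 := by
    refine Finset.sum_le_sum fun d hd => ?_
    have hd1 : 0 < d := Nat.pos_of_mem_divisors hd
    have hc : ((n / d : ℕ) : ℝ) ≤ (n : ℝ) * (d : ℝ)⁻¹ := by
      rw [← div_eq_mul_inv]; exact Nat.cast_div_le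
    have h0 : (0 : ℝ) ≤ ((n / d : ℕ) : ℝ) := by positivity
    calc ((n / d : ℕ) : ℝ) ^ 2 ≤ ((n : ℝ) * (d : ℝ)⁻¹) ^ 2 := by
          exact pow_le_pow_left₀ h0 hc 2
      _ = (n : ℝ) ^ 2 * ((d : ℝ)⁻¹) ^ 2 := by ring
  have h4 : ∑ d ∈ n.divisors, (n : ℝ) ^ 2 * ((d : ℝ)⁻¹) ^ 2 =
      (n : ℝ) ^ 2 * ∑ d ∈ n.divisors, ((d : ℝ)⁻¹) ^ 2 := by rw [Finset.mul_sum]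
  have hsub : n.divisors ⊆ Finset.Icc 1 n := by
    intro d hd
    rw [Finset.mem_Icc]
    exact ⟨Nat.pos_of_mem_divisors hd, Nat.le_of_dvd hn (Nat.dvd_of_mem_divisors hd)⟩
  have h5 : ∑ d ∈ n.divisors, ((d : ℝ)⁻¹) ^ 2 ≤ ∑ d ∈ Finset.Icc 1 n, ((d : ℝ)⁻¹) ^ 2 :=
    Finset.sum_le_sum_of_subset_of_nonneg hsub (fun i _ _ => by positivity)
  have h6 := sum_inv_sq_le n hn
  have h7 : (0 : ℝ) ≤ (n : ℝ)⁻¹ := by positivity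
  have h8 : ∑ d ∈ n.divisors, ((d : ℝ)⁻¹) ^ 2 ≤ 2 := by linarith
  calc ∑ d ∈ n.divisors, ((n / d : ℕ) : ℝ) ^ 2
      ≤ (n : ℝ) ^ 2 * ∑ d ∈ n.divisors, ((d : ℝ)⁻¹) ^ 2 := by rw [← h4]; exact h3
    _ ≤ (n : ℝ) ^ 2 * 2 := by
        exact mul_le_mul_of_nonneg_left h8 (by positivity)
    _ = 2 * (n : ℝ) ^ 2 := by ring

lemma P_aux (x : ℝ) (hx : 5 ≤ x) (n : ℕ)
    (H : ∀ m, m ≤ n → ((m : ℝ) + 1) ^ 2 ≤ (P m).eval x) :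
    x * ((n : ℝ) + 1) ^ 2 ≤ (P (n + 1)).eval x := by
  have hx0 : (0 : ℝ) < x := by linarith
  rw [P_eval_succ]
  have hsum : ((n : ℝ) + 1) * ((n : ℝ) + 1) ^ 2 ≤
      ∑ k ∈ Finset.range (n + 1), (sigma2 (k + 1) : ℝ) * (P (n - k)).eval x := by
    calc ((n : ℝ) + 1) * ((n : ℝ) + 1) ^ 2
        = ∑ _k ∈ Finset.range (n + 1), ((n : ℝ) + 1) ^ 2 := by
          rw [Finset.sum_const, Finset.card_range]; push_cast; ring
      _ ≤ _ := by
          refine Finset.sum_le_sum fun k hk => ?_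
          rw [Finset.mem_range] at hk
          obtain ⟨m, rfl⟩ : ∃ m, n = k + m := ⟨n - k, by omega⟩
          have hmk : k + m - k = m := by omega
          rw [hmk]
          have k0 : (0 : ℝ) ≤ (k : ℝ) := by positivity
          have m0 : (0 : ℝ) ≤ (m : ℝ) := by positivity
          have A : ((k : ℝ) + 1) ^ 2 ≤ (sigma2 (k + 1) : ℝ) := by
            have := sq_le_sigma2 (k + 1) (Nat.succ_pos k)
            push_cast at this ⊢
            exact_mod_cast this
          have B : ((m : ℝ) + 1) ^ 2 ≤ (P m).eval x := H m (by omega)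
          have C : ((k : ℝ) + 1) ^ 2 * ((m : ℝ) + 1) ^ 2 ≤
              (sigma2 (k + 1) : ℝ) * (P m).eval x :=
            mul_le_mul A B (by positivity) (le_trans (by positivity) A)
          have D : ((k : ℝ) + (m : ℝ) + 1) ≤ ((k : ℝ) + 1) * ((m : ℝ) + 1) := by
            nlinarith [mul_nonneg k0 m0]
          push_cast
          nlinarith [C, D, mul_le_mul D D (by positivity) (by positivity)]
  have h2 := mul_le_mul_of_nonneg_left hsum
    (by positivity : (0 : ℝ) ≤ ((n : ℝ) + 1)⁻¹ * x)
  have h3 : ((n : ℝ) + 1)⁻¹ * x * (((n : ℝ) + 1) * ((n : ℝ) + 1) ^ 2) =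
      x * ((n : ℝ) + 1) ^ 2 := by
    have h : ((n : ℝ) + 1) ≠ 0 := by positivity
    field_simp
  calc x * ((n : ℝ) + 1) ^ 2 = _ := h3.symm
    _ ≤ _ := by rw [mul_assoc] at h2 ⊢; exact h2

lemma P_ge_sq (x : ℝ) (hx : 5 ≤ x) : ∀ n : ℕ, ((n : ℝ) + 1) ^ 2 ≤ (P n).eval x := by
  intro n
  induction n using Nat.strong_induction_on with
  | _ n ih =>
    match n with
    | 0 => simp [P]
    | n + 1 =>
      have h := P_aux x hx n (fun m hm => ih m (by omega))
      have n0 : (0 : ℝ) ≤ (n : ℝ) := by positivity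
      push_cast
      nlinarith [h]

lemma P_ge_xsq (x : ℝ) (hx : 5 ≤ x) (n : ℕ) (hn : 0 < n) :
    x * (n : ℝ) ^ 2 ≤ (P n).eval x := by
  obtain ⟨m, rfl⟩ : ∃ m, n = m + 1 := ⟨n - 1, by omega⟩
  have h := P_aux x hx m (fun k _ => P_ge_sq x hx k)
  push_cast
  linarith

lemma P_one_eval (x : ℝ) : (P 1).eval x = x := by
  rw [show (1 : ℕ) = 0 + 1 from rfl, P_eval_succ]
  simp [sigma2_one, P]

lemma sigma2_key (x : ℝ) (hx : 5 < x) (b j : ℕ) (hb : 0 < b) (hj : 0 < j) :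
    (sigma2 (b + j) : ℝ) < (sigma2 j : ℝ) * (P b).eval x := by
  by_cases hbj : b = 1 ∧ j = 1
  · obtain ⟨rfl, rfl⟩ := hbj
    rw [P_one_eval]
    norm_num [sigma2_one, sigma2_two]
    linarith
  · have h3 : 2 * (b + j) ≤ 3 * (b * j) := by
      rcases Nat.lt_or_ge b 2 with hb2 | hb2
      · have hb1 : b = 1 := by omega
        have hj2 : 2 ≤ j := by
          rcases Nat.lt_or_ge j 2 with h | h
          · exact absurd ⟨hb1, by omega⟩ hbj
          · exact h
        subst hb1; omega
      · rcases Nat.lt_or_ge j 2 with hj2 | hj2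
        · have hj1 : j = 1 := by omega
          subst hj1; omega
        · nlinarith
    have h3r : 2 * ((b : ℝ) + (j : ℝ)) ≤ 3 * ((b : ℝ) * (j : ℝ)) := by exact_mod_cast h3
    have hA : (sigma2 (b + j) : ℝ) ≤ 2 * ((b : ℝ) + (j : ℝ)) ^ 2 := by
      have := sigma2_le_real (b + j); push_cast at this ⊢; linarith
    have hB : (j : ℝ) ^ 2 ≤ (sigma2 j : ℝ) := by
      have := sq_le_sigma2 j hj; exact_mod_cast this
    have hC : x * (b : ℝ) ^ 2 ≤ (P b).eval x := P_ge_xsq x (le_of_lt (by linarith)) b hb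
    have hb1 : (1 : ℝ) ≤ (b : ℝ) := by exact_mod_cast hb
    have hj1 : (1 : ℝ) ≤ (j : ℝ) := by exact_mod_cast hj
    have hPpos : 0 < (P b).eval x := P_pos x (by linarith) b
    have hD : (j : ℝ) ^ 2 * (x * (b : ℝ) ^ 2) ≤ (sigma2 j : ℝ) * (P b).eval x :=
      mul_le_mul hB hC (by positivity) (le_trans (by positivity) hB)
    have hsq : (2 * ((b : ℝ) + (j : ℝ))) * (2 * ((b : ℝ) + (j : ℝ))) ≤
        (3 * ((b : ℝ) * (j : ℝ))) * (3 * ((b : ℝ) * (j : ℝ))) :=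
      mul_le_mul h3r h3r (by positivity) (by positivity)
    nlinarith [hA, hD, hsq, hx, hb1, hj1, mul_le_mul hb1 hj1 (by norm_num) (by linarith)]

/-- For every real `x > 5` and all positive integers `a, b`:
`P a` and `P b` evaluated at `x` multiply to more than `P (a+b)` at `x`. -/
theorem P_bessenrodt_ono_gt_five (x : ℝ) (hx : x > 5) (a b : ℕ) (ha : 0 < a) (hb : 0 < b) :
    (P a).eval x * (P b).eval x > (P (a + b)).eval x := by
  have hx0 : (0 : ℝ) < x := by linarith
  have main : ∀ b : ℕ, 0 < b → (P (a + b)).eval x < (P a).eval x * (P b).eval x := by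
    intro b
    induction b using Nat.strong_induction_on with
    | _ b ih =>
      intro hb
      obtain ⟨n, hn⟩ : ∃ n, a + b = n + 1 := ⟨a + b - 1, by omega⟩
      have hmain := P_eval_succ' x n
      have hsplit : n + 1 = (b - 1) + (a + 1) := by omega
      have hsum : ∑ k ∈ Finset.range (n + 1), (sigma2 (k + 1) : ℝ) * (P (n - k)).eval x =
          (∑ k ∈ Finset.range (b - 1), (sigma2 (k + 1) : ℝ) * (P (n - k)).eval x) +
          ((∑ i ∈ Finset.range a,
              (sigma2 ((b - 1) + (i + 1) + 1) : ℝ) * (P (n - ((b - 1) + (i + 1)))).eval x) +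
            (sigma2 ((b - 1) + 0 + 1) : ℝ) * (P (n - ((b - 1) + 0))).eval x) := by
        rw [hsplit, Finset.sum_range_add]
        congr 1
        exact Finset.sum_range_succ' _ a
      -- the (i = 0) term
      have hg0 : (sigma2 ((b - 1) + 0 + 1) : ℝ) * (P (n - ((b - 1) + 0))).eval x =
          (sigma2 b : ℝ) * (P a).eval x := by
        have e1 : (b - 1) + 0 + 1 = b := by omega
        have e2 : n - ((b - 1) + 0) = a := by omega
        rw [e1, e2]
      -- bound the first block using the induction hypothesis
      have hA : ∑ k ∈ Finset.range (b - 1), (sigma2 (k + 1) : ℝ) * (P (n - k)).eval x ≤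
          (P a).eval x * ∑ k ∈ Finset.range (b - 1),
            (sigma2 (k + 1) : ℝ) * (P (b - 1 - k)).eval x := by
        rw [Finset.mul_sum]
        refine Finset.sum_le_sum fun k hk => ?_
        rw [Finset.mem_range] at hk
        have e1 : n - k = a + (b - 1 - k) := by omega
        rw [e1]
        have h2 := ih (b - 1 - k) (by omega) (by omega)
        have h3 : (0 : ℝ) ≤ (sigma2 (k + 1) : ℝ) := by positivity
        calc (sigma2 (k + 1) : ℝ) * (P (a + (b - 1 - k))).eval x
            ≤ (sigma2 (k + 1) : ℝ) * ((P a).eval x * (P (b - 1 - k)).eval x) :=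
              mul_le_mul_of_nonneg_left h2.le h3
          _ = (P a).eval x * ((sigma2 (k + 1) : ℝ) * (P (b - 1 - k)).eval x) := by ring
      -- bound the second block, strictly, using the sigma2 key lemma
      have hB : (∑ i ∈ Finset.range a,
            (sigma2 ((b - 1) + (i + 1) + 1) : ℝ) * (P (n - ((b - 1) + (i + 1)))).eval x) <
          (P b).eval x * ∑ i ∈ Finset.range a,
            (sigma2 (i + 1) : ℝ) * (P (a - 1 - i)).eval x := by
        rw [Finset.mul_sum]
        refine Finset.sum_lt_sum_of_nonempty ⟨0, Finset.mem_range.mpr ha⟩ fun i hi => ?_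
        rw [Finset.mem_range] at hi
        have e1 : (b - 1) + (i + 1) + 1 = b + (i + 1) := by omega
        have e2 : n - ((b - 1) + (i + 1)) = a - 1 - i := by omega
        rw [e1, e2]
        have hk := sigma2_key x hx b (i + 1) hb (Nat.succ_pos i)
        have hp := P_pos x hx0 (a - 1 - i)
        calc (sigma2 (b + (i + 1)) : ℝ) * (P (a - 1 - i)).eval x
            < ((sigma2 (i + 1) : ℝ) * (P b).eval x) * (P (a - 1 - i)).eval x :=
              mul_lt_mul_of_pos_right hk hp
          _ = (P b).eval x * ((sigma2 (i + 1) : ℝ) * (P (a - 1 - i)).eval x) := by ring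
      -- recurrence identities for b and a
      have hbid : (b : ℝ) * (P b).eval x =
          x * ((∑ k ∈ Finset.range (b - 1), (sigma2 (k + 1) : ℝ) * (P (b - 1 - k)).eval x) +
            (sigma2 b : ℝ)) := by
        have h := P_eval_succ' x (b - 1)
        have e1 : (b - 1) + 1 = b := by omega
        rw [Finset.sum_range_succ] at h
        rw [e1] at h
        have e2 : ((b - 1 : ℕ) : ℝ) + 1 = (b : ℝ) := by
          rw [Nat.cast_sub hb]; ring
        rw [e2] at h
        simpa [Nat.sub_self, P] using h
      have haid : (a : ℝ) * (P a).eval x =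
          x * ∑ i ∈ Finset.range a, (sigma2 (i + 1) : ℝ) * (P (a - 1 - i)).eval x := by
        have h := P_eval_succ' x (a - 1)
        have e1 : (a - 1) + 1 = a := by omega
        rw [e1] at h
        have e2 : ((a - 1 : ℕ) : ℝ) + 1 = (a : ℝ) := by
          rw [Nat.cast_sub ha]; ring
        rw [e2] at h
        exact h
      have hcast : ((n : ℝ) + 1) = (a : ℝ) + (b : ℝ) := by
        have : ((a + b : ℕ) : ℝ) = ((n + 1 : ℕ) : ℝ) := by rw [hn]
        push_cast at this
        linarith
      rw [hsum, hg0, hcast] at hmain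
      -- assemble everything
      have hA2 : x * (∑ k ∈ Finset.range (b - 1), (sigma2 (k + 1) : ℝ) * (P (n - k)).eval x) ≤
          x * ((P a).eval x * ∑ k ∈ Finset.range (b - 1),
            (sigma2 (k + 1) : ℝ) * (P (b - 1 - k)).eval x) :=
        mul_le_mul_of_nonneg_left hA hx0.le
      have hB2 : x * (∑ i ∈ Finset.range a,
            (sigma2 ((b - 1) + (i + 1) + 1) : ℝ) * (P (n - ((b - 1) + (i + 1)))).eval x) <
          x * ((P b).eval x * ∑ i ∈ Finset.range a,
            (sigma2 (i + 1) : ℝ) * (P (a - 1 - i)).eval x) :=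
        mul_lt_mul_of_pos_left hB hx0
      have hbid' : (P a).eval x * ((b : ℝ) * (P b).eval x) =
          (P a).eval x * (x * ((∑ k ∈ Finset.range (b - 1),
            (sigma2 (k + 1) : ℝ) * (P (b - 1 - k)).eval x) + (sigma2 b : ℝ))) := by
        rw [hbid]
      have haid' : (P b).eval x * ((a : ℝ) * (P a).eval x) =
          (P b).eval x * (x * ∑ i ∈ Finset.range a,
            (sigma2 (i + 1) : ℝ) * (P (a - 1 - i)).eval x) := by
        rw [haid]
      have hfin : ((a : ℝ) + (b : ℝ)) * (P (n + 1)).eval x <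
          ((a : ℝ) + (b : ℝ)) * ((P a).eval x * (P b).eval x) := by
        rw [hmain]
        nlinarith [hA2, hB2, hbid', haid']
      have hab : (0 : ℝ) < (a : ℝ) + (b : ℝ) := by
        have : (1 : ℝ) ≤ (a : ℝ) := by exact_mod_cast ha
        have : (0 : ℝ) ≤ (b : ℝ) := by positivity
        linarith
      rw [hn]
      exact lt_of_mul_lt_mul_left hfin hab.le
  exact main b hb
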